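/- Let (V,d) be a finite metric space, p ≥ 1 a real number, and let F, F* ⊆ V be nonempty sets with |F| = |F*| = k. Suppose F is single-swap locally optimal for the ℓ_p objective, i.e., for every r ∈ F and f' ∈ V we have Φ_p((F \ {r}) ∪ {f'}) ≥ Φ_p(F). Then 0 ≤ Φ_p(F*)^p − 3·Φ_p(F)^p + 2·(2·Φ_p(F*) + Φ_p(F))^p. -/

import Mathlib

open Finset

/-- Distance from a client `j` to a nonempty facility set `F`: `min_{f ∈ F} d(j,f)`. -/
noncomputable def distSet {V : Type*} [MetricSpace V] (j : V) (F : Finset V)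
    (hF : F.Nonempty) : ℝ :=
  F.inf' hF fun f => dist j f

/-- The ℓ_p-norm cost of a nonempty facility set `F`:
`Φ_p(F) = (∑_{j ∈ V} d(j,F)^p)^{1/p}`. -/
noncomputable def phiP {V : Type*} [MetricSpace V] [Fintype V] (p : ℝ) (F : Finset V)
    (hF : F.Nonempty) : ℝ :=
  (∑ j : V, distSet j F hF ^ p) ^ (1 / p)

/-- Existence of the swap pairing: each `g ∈ Fstar` gets a facility `r g ∈ F` such that
no other optimal facility maps (via the nearest map `η`) to `r g`, and each facility of `F`
is used at most twice. -/
lemma exists_swap_map {V : Type*} [DecidableEq V] (F Fstar : Finset V)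
    (hcard : F.card = Fstar.card) (η : V → V) (hη : ∀ g ∈ Fstar, η g ∈ F) :
    ∃ r : V → V, (∀ g ∈ Fstar, r g ∈ F) ∧
      (∀ g ∈ Fstar, ∀ g' ∈ Fstar, η g' = r g → g' = g) ∧
      (∀ x : V, (Fstar.filter (fun g => r g = x)).card ≤ 2) := by
  classical
  set deg : V → ℕ := fun x => (Fstar.filter (fun g => η g = x)).card with hdeg
  set Z : Finset V := F.filter (fun x => deg x = 0) with hZ
  set M : Finset V := Fstar.filter (fun g => 2 ≤ deg (η g)) with hM
  -- every g ∈ Fstar has deg (η g) ≥ 1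
  have hdegpos : ∀ g ∈ Fstar, 1 ≤ deg (η g) := by
    intro g hg
    have : g ∈ Fstar.filter (fun g' => η g' = η g) := by simp [hg]
    exact Finset.card_pos.mpr ⟨g, this⟩
  -- counting: M.card ≤ 2 * Z.card
  have hsumdeg : Fstar.card = ∑ x ∈ F, deg x :=
    Finset.card_eq_sum_card_fiberwise hη
  have hMcard : M.card = ∑ x ∈ F, (if 2 ≤ deg x then deg x else 0) := by
    have h1 : M.card = ∑ x ∈ F, (M.filter (fun g => η g = x)).card :=
      Finset.card_eq_sum_card_fiberwise (fun g hg => hη g (Finset.mem_filter.mp hg).1)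
    rw [h1]
    refine Finset.sum_congr rfl fun x _ => ?_
    by_cases hx : 2 ≤ deg x
    · rw [if_pos hx]
      have : M.filter (fun g => η g = x) = Fstar.filter (fun g => η g = x) := by
        ext g
        simp only [hM, Finset.mem_filter, and_assoc]
        constructor
        · rintro ⟨h1, _, h3⟩; exact ⟨h1, h3⟩
        · rintro ⟨h1, h3⟩; exact ⟨h1, by rw [h3]; exact hx, h3⟩
      rw [this]
    · rw [if_neg hx]
      have : M.filter (fun g => η g = x) = ∅ := by
        ext g
        simp only [hM, Finset.mem_filter, Finset.notMem_empty, iff_false]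
        rintro ⟨⟨h1, h2⟩, h3⟩
        exact hx (h3 ▸ h2)
      simp [this]
  have hZcard : Z.card = ∑ x ∈ F, (if deg x = 0 then 1 else 0) := by
    rw [hZ, Finset.card_filter]
  have hkey : M.card ≤ 2 * Z.card := by
    have hpt : ∀ x ∈ F, (if 2 ≤ deg x then deg x else 0) + 2 * 1
        ≤ 2 * deg x + 2 * (if deg x = 0 then 1 else 0) := by
      intro x _
      rcases Nat.lt_or_ge (deg x) 2 with h | h
      · interval_cases h : deg x <;> simp
      · rw [if_pos h, if_neg (by omega)]; omega
    have hsum := Finset.sum_le_sum hpt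
    simp only [Finset.sum_add_distrib, ← Finset.mul_sum] at hsum
    rw [Finset.sum_const, smul_eq_mul, mul_one] at hsum
    omega
  -- build the embedding from M into Z × Fin 2
  have hcards : Fintype.card ↥M ≤ (Z ×ˢ (Finset.univ : Finset (Fin 2))).card := by
    rw [Fintype.card_coe, Finset.card_product]
    simpa [mul_comm] using hkey
  obtain ⟨e, he⟩ := Function.Embedding.exists_of_card_le_finset hcards
  set E : V → V × Fin 2 := fun g => if h : g ∈ M then e ⟨g, h⟩ else (g, 0) with hE
  have hEZ : ∀ g ∈ M, E g ∈ Z ×ˢ (Finset.univ : Finset (Fin 2)) := by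
    intro g hg
    rw [hE]; simp only [dif_pos hg]
    exact he ⟨⟨g, hg⟩, rfl⟩
  have hEinj : ∀ g ∈ M, ∀ g' ∈ M, E g = E g' → g = g' := by
    intro g hg g' hg' h
    rw [hE] at h; simp only [dif_pos hg, dif_pos hg'] at h
    have := e.injective h
    exact Subtype.mk_eq_mk.mp this
  set z : V → V := fun g => (E g).1 with hz
  have hzZ : ∀ g ∈ M, z g ∈ Z := by
    intro g hg
    have := hEZ g hg
    rw [Finset.mem_product] at this
    exact this.1
  have hzfib : ∀ x : V, (M.filter (fun g => z g = x)).card ≤ 2 := by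
    intro x
    have h2 : (({x} : Finset V) ×ˢ (Finset.univ : Finset (Fin 2))).card = 2 := by
      simp
    rw [← h2]
    apply Finset.card_le_card_of_injOn E
    · intro g hg
      rw [Finset.mem_coe, Finset.mem_filter] at hg
      rw [Finset.mem_coe, Finset.mem_product]
      exact ⟨by simp [← hg.2, hz], Finset.mem_univ _⟩
    · intro g hg g' hg' hEe
      simp only [Finset.coe_filter, Set.mem_setOf_eq] at hg hg'
      exact hEinj g hg.1 g' hg'.1 hEe
  -- define r
  refine ⟨fun g => if deg (η g) = 1 then η g else z g, ?_, ?_, ?_⟩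
  · intro g hg
    by_cases h1 : deg (η g) = 1
    · simp only [if_pos h1]; exact hη g hg
    · simp only [if_neg h1]
      have hgM : g ∈ M := by
        rw [hM, Finset.mem_filter]
        exact ⟨hg, by have := hdegpos g hg; omega⟩
      exact Finset.mem_of_mem_filter _ (hzZ g hgM)
  · intro g hg g' hg' hgg
    by_cases h1 : deg (η g) = 1
    · simp only [if_pos h1] at hgg
      have hmem : g' ∈ Fstar.filter (fun a => η a = η g) := by simp [hg', hgg]
      have hmem' : g ∈ Fstar.filter (fun a => η a = η g) := by simp [hg]
      have : (Fstar.filter (fun a => η a = η g)).card ≤ 1 := le_of_eq h1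
      exact Finset.card_le_one.mp this _ hmem _ hmem'
    · simp only [if_neg h1] at hgg
      exfalso
      have hgM : g ∈ M := by
        rw [hM, Finset.mem_filter]
        exact ⟨hg, by have := hdegpos g hg; omega⟩
      have hzg := hzZ g hgM
      rw [hZ, Finset.mem_filter] at hzg
      have h1' : 1 ≤ deg (z g) := by
        have : g' ∈ Fstar.filter (fun a => η a = z g) := by simp [hg', hgg]
        exact Finset.card_pos.mpr ⟨g', this⟩
      omega
  · intro x
    by_cases hx : deg x = 0
    · calc (Fstar.filter (fun g => (if deg (η g) = 1 then η g else z g) = x)).card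
          ≤ (M.filter (fun g => z g = x)).card := by
            apply Finset.card_le_card
            intro g hg
            rw [Finset.mem_filter] at hg
            obtain ⟨hg1, hg2⟩ := hg
            by_cases h1 : deg (η g) = 1
            · rw [if_pos h1] at hg2; exact absurd (hg2 ▸ h1) (by omega)
            · rw [if_neg h1] at hg2
              rw [Finset.mem_filter]
              refine ⟨?_, hg2⟩
              rw [hM, Finset.mem_filter]
              exact ⟨hg1, by have := hdegpos g hg1; omega⟩
        _ ≤ 2 := hzfib x
    · -- deg x ≥ 1; the fiber consists only of g with r g = η g = x, so card ≤ 1 if deg x = 1,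
      -- and is empty otherwise
      have hsub : Fstar.filter (fun g => (if deg (η g) = 1 then η g else z g) = x)
          ⊆ Fstar.filter (fun g => η g = x) := by
        intro g hg
        rw [Finset.mem_filter] at hg ⊢
        obtain ⟨hg1, hg2⟩ := hg
        refine ⟨hg1, ?_⟩
        by_cases h1 : deg (η g) = 1
        · rwa [if_pos h1] at hg2
        · rw [if_neg h1] at hg2
          exfalso
          have hgM : g ∈ M := by
            rw [hM, Finset.mem_filter]
            exact ⟨hg1, by have := hdegpos g hg1; omega⟩
          have hzg := hzZ g hgM
          rw [hZ, Finset.mem_filter] at hzg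
          exact hx (hg2 ▸ hzg.2)
      have hone : ∀ g ∈ Fstar.filter (fun g => (if deg (η g) = 1 then η g else z g) = x),
          deg x = 1 := by
        intro g hg
        have hgx : η g = x := (Finset.mem_filter.mp (hsub hg)).2
        rw [Finset.mem_filter] at hg
        obtain ⟨hg1, hg2⟩ := hg
        by_cases h1 : deg (η g) = 1
        · exact hgx ▸ h1
        · rw [if_neg h1] at hg2
          exfalso
          have hgM : g ∈ M := by
            rw [hM, Finset.mem_filter]
            exact ⟨hg1, by have := hdegpos g hg1; omega⟩
          have hzg := hzZ g hgM
          rw [hZ, Finset.mem_filter] at hzg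
          exact hx (hg2 ▸ hzg.2)
      rcases Finset.eq_empty_or_nonempty
          (Fstar.filter (fun g => (if deg (η g) = 1 then η g else z g) = x)) with hemp | ⟨g0, hg0⟩
      · rw [hemp]; simp
      · have hdx : deg x = 1 := hone g0 hg0
        calc (Fstar.filter (fun g => (if deg (η g) = 1 then η g else z g) = x)).card
            ≤ (Fstar.filter (fun g => η g = x)).card := Finset.card_le_card hsub
          _ = deg x := rfl
          _ ≤ 2 := by omega


lemma distSet_nonneg {V : Type*} [MetricSpace V] (j : V) (F : Finset V) (hF : F.Nonempty) :
    0 ≤ distSet j F hF :=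
  Finset.le_inf' hF _ fun _ _ => dist_nonneg

lemma distSet_le {V : Type*} [MetricSpace V] (j : V) (F : Finset V) (hF : F.Nonempty)
    {x : V} (hx : x ∈ F) : distSet j F hF ≤ dist j x :=
  Finset.inf'_le _ hx

lemma phiP_pow {V : Type*} [MetricSpace V] [Fintype V] {p : ℝ} (hp : 1 ≤ p)
    (F : Finset V) (hF : F.Nonempty) :
    phiP p F hF ^ p = ∑ j : V, distSet j F hF ^ p := by
  have h0 : (0:ℝ) ≤ ∑ j : V, distSet j F hF ^ p :=
    Finset.sum_nonneg fun j _ => Real.rpow_nonneg (distSet_nonneg j F hF) p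
  have hp0 : p ≠ 0 := by positivity
  rw [phiP, ← Real.rpow_mul h0, one_div, inv_mul_cancel₀ hp0, Real.rpow_one]

lemma phiP_nonneg {V : Type*} [MetricSpace V] [Fintype V] (p : ℝ)
    (F : Finset V) (hF : F.Nonempty) : 0 ≤ phiP p F hF :=
  Real.rpow_nonneg (Finset.sum_nonneg fun j _ =>
    Real.rpow_nonneg (distSet_nonneg j F hF) p) _

/-- At a single-swap local optimum for the ℓ_p objective,
`0 ≤ Φ_p(F*)^p − 3·Φ_p(F)^p + 2·(2·Φ_p(F*) + Φ_p(F))^p`. -/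
theorem lp_single_swap_inequality {V : Type*} [MetricSpace V] [Fintype V] [DecidableEq V]
    (p : ℝ) (hp : 1 ≤ p) (k : ℕ)
    (F Fstar : Finset V) (hF : F.Nonempty) (hFstar : Fstar.Nonempty)
    (hcardF : F.card = k) (hcardFstar : Fstar.card = k)
    (hlocal : ∀ r ∈ F, ∀ f' : V,
      phiP p (insert f' (F.erase r)) (insert_nonempty _ _) ≥ phiP p F hF) :
    0 ≤ phiP p Fstar hFstar ^ p - 3 * phiP p F hF ^ p +
        2 * (2 * phiP p Fstar hFstar + phiP p F hF) ^ p := by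
  classical
  have hp0 : (0:ℝ) ≤ p := le_trans zero_le_one hp
  -- abbreviations
  set d : V → ℝ := fun j => distSet j F hF with hd
  set ds : V → ℝ := fun j => distSet j Fstar hFstar with hds
  have hd0 : ∀ j, 0 ≤ d j := fun j => distSet_nonneg j F hF
  have hds0 : ∀ j, 0 ≤ ds j := fun j => distSet_nonneg j Fstar hFstar
  set B : ℝ := ∑ j : V, d j ^ p with hB
  set A : ℝ := ∑ j : V, ds j ^ p with hA
  -- nearest facility choice functions
  have hexf : ∀ j : V, ∃ x, x ∈ F ∧ d j = dist j x := by
    intro j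
    obtain ⟨x, hx, he⟩ := Finset.exists_mem_eq_inf' hF (fun y => dist j y)
    exact ⟨x, hx, he⟩
  choose f hfF hfd using hexf
  have hexfs : ∀ j : V, ∃ x, x ∈ Fstar ∧ ds j = dist j x := by
    intro j
    obtain ⟨x, hx, he⟩ := Finset.exists_mem_eq_inf' hFstar (fun y => dist j y)
    exact ⟨x, hx, he⟩
  choose fs hfsF hfsd using hexfs
  have hexη : ∀ g : V, ∃ x, x ∈ F ∧ ∀ y ∈ F, dist g x ≤ dist g y := by
    intro g
    obtain ⟨x, hx, he⟩ := Finset.exists_mem_eq_inf' hF (fun y => dist g y)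
    exact ⟨x, hx, fun y hy => he ▸ Finset.inf'_le _ hy⟩
  choose η hηF hηmin using hexη
  -- the swap pairing
  obtain ⟨r, hr1, hr2, hr3⟩ := exists_swap_map F Fstar
    (by rw [hcardF, hcardFstar]) η (fun g _ => hηF g)
  -- reassignment cost
  set c : V → V → ℝ := fun j g =>
    if fs j = g then ds j else if r g = f j then d j + 2 * ds j else d j with hc
  -- per-swap inequality
  have key : ∀ g ∈ Fstar, B ≤ ∑ j : V, c j g ^ p := by
    intro g hg
    have hrg : r g ∈ F := hr1 g hg
    have hloc := hlocal (r g) hrg g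
    have hstep : B ≤ ∑ j : V, distSet j (insert g (F.erase (r g))) (insert_nonempty _ _) ^ p := by
      have h := Real.rpow_le_rpow (phiP_nonneg p F hF) hloc hp0
      rw [phiP_pow hp F hF, phiP_pow hp _ (insert_nonempty g (F.erase (r g)))] at h
      exact h
    refine hstep.trans (Finset.sum_le_sum fun j _ => ?_)
    apply Real.rpow_le_rpow (distSet_nonneg _ _ _) _ hp0
    by_cases h1 : fs j = g
    · rw [hc]; simp only [if_pos h1]
      calc distSet j (insert g (F.erase (r g))) (insert_nonempty _ _)
          ≤ dist j g := distSet_le _ _ _ (Finset.mem_insert_self _ _)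
        _ = ds j := by rw [← h1, ← hfsd]
    · by_cases h2 : r g = f j
      · rw [hc]; simp only [if_neg h1, if_pos h2]
        have hfsj : fs j ∈ Fstar := hfsF j
        have hne : η (fs j) ≠ r g := fun hcon => h1 (hr2 g hg (fs j) hfsj hcon)
        have hmem : η (fs j) ∈ insert g (F.erase (r g)) :=
          Finset.mem_insert_of_mem (Finset.mem_erase.mpr ⟨hne, hηF (fs j)⟩)
        calc distSet j (insert g (F.erase (r g))) (insert_nonempty _ _)
            ≤ dist j (η (fs j)) := distSet_le _ _ _ hmem
          _ ≤ dist j (fs j) + dist (fs j) (η (fs j)) := dist_triangle _ _ _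
          _ ≤ dist j (fs j) + dist (fs j) (f j) := by
              exact add_le_add_right (hηmin (fs j) (f j) (hfF j)) _
          _ ≤ dist j (fs j) + (dist (fs j) j + dist j (f j)) := by
              exact add_le_add_right (dist_triangle _ _ _) _
          _ = d j + 2 * ds j := by rw [dist_comm (fs j) j, ← hfsd, ← hfd]; ring
      · rw [hc]; simp only [if_neg h1, if_neg h2]
        have hmem : f j ∈ insert g (F.erase (r g)) :=
          Finset.mem_insert_of_mem (Finset.mem_erase.mpr ⟨fun h => h2 h.symm, hfF j⟩)
        calc distSet j (insert g (F.erase (r g))) (insert_nonempty _ _)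
            ≤ dist j (f j) := distSet_le _ _ _ hmem
          _ = d j := (hfd j).symm
  -- pointwise bound on c^p
  set Δ : V → ℝ := fun j => (d j + 2 * ds j) ^ p - d j ^ p with hΔ
  have hΔ0 : ∀ j, 0 ≤ Δ j := by
    intro j
    have : d j ^ p ≤ (d j + 2 * ds j) ^ p :=
      Real.rpow_le_rpow (hd0 j) (by have := hds0 j; linarith) hp0
    simp only [hΔ]; linarith
  have hcb : ∀ j g, c j g ^ p ≤
      (if fs j = g then ds j ^ p else d j ^ p) + (if r g = f j then Δ j else 0) := by
    intro j g
    by_cases h1 : fs j = g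
    · rw [hc]; simp only [if_pos h1]
      have h0 : (0:ℝ) ≤ if r g = f j then Δ j else 0 := by
        split
        · exact hΔ0 j
        · exact le_refl 0
      linarith
    · by_cases h2 : r g = f j
      · rw [hc]; simp only [if_neg h1, if_pos h2, hΔ]
        exact le_of_eq (by ring)
      · rw [hc]; simp only [if_neg h1, if_neg h2, add_zero, le_refl]
  -- summation over all swaps
  have hsum1 : (Fstar.card : ℝ) * B ≤ ∑ g ∈ Fstar, ∑ j : V, c j g ^ p := by
    calc (Fstar.card : ℝ) * B = ∑ _g ∈ Fstar, B := by rw [Finset.sum_const, nsmul_eq_mul]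
      _ ≤ _ := Finset.sum_le_sum fun g hg => key g hg
  have hite1 : ∀ j, ∑ g ∈ Fstar, (if fs j = g then ds j ^ p else d j ^ p)
      = ds j ^ p + ((Fstar.card : ℝ) - 1) * d j ^ p := by
    intro j
    have hmem : fs j ∈ Fstar := hfsF j
    have hcongr : ∀ g ∈ Fstar, (if fs j = g then ds j ^ p else d j ^ p)
        = d j ^ p + (if fs j = g then ds j ^ p - d j ^ p else 0) := by
      intro g _; split <;> ring
    rw [Finset.sum_congr rfl hcongr, Finset.sum_add_distrib, Finset.sum_const,
      Finset.sum_ite_eq, if_pos hmem, nsmul_eq_mul]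
    ring
  have hite2 : ∀ j, ∑ g ∈ Fstar, (if r g = f j then Δ j else 0) ≤ 2 * Δ j := by
    intro j
    rw [← Finset.sum_filter, Finset.sum_const, nsmul_eq_mul]
    apply mul_le_mul_of_nonneg_right _ (hΔ0 j)
    exact_mod_cast hr3 (f j)
  set S : ℝ := ∑ j : V, (d j + 2 * ds j) ^ p with hS
  have hsum2 : ∑ g ∈ Fstar, ∑ j : V, c j g ^ p ≤
      A + ((Fstar.card : ℝ) - 1) * B + 2 * (S - B) := by
    calc ∑ g ∈ Fstar, ∑ j : V, c j g ^ p
        ≤ ∑ g ∈ Fstar, ∑ j : V, ((if fs j = g then ds j ^ p else d j ^ p)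
            + (if r g = f j then Δ j else 0)) :=
          Finset.sum_le_sum fun g _ => Finset.sum_le_sum fun j _ => hcb j g
      _ = ∑ j : V, ∑ g ∈ Fstar, ((if fs j = g then ds j ^ p else d j ^ p)
            + (if r g = f j then Δ j else 0)) := Finset.sum_comm
      _ = ∑ j : V, ((∑ g ∈ Fstar, (if fs j = g then ds j ^ p else d j ^ p))
            + ∑ g ∈ Fstar, (if r g = f j then Δ j else 0)) := by
          refine Finset.sum_congr rfl fun j _ => ?_
          rw [Finset.sum_add_distrib]
      _ ≤ ∑ j : V, ((ds j ^ p + ((Fstar.card : ℝ) - 1) * d j ^ p) + 2 * Δ j) := by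
          refine Finset.sum_le_sum fun j _ => ?_
          rw [hite1 j]
          exact add_le_add_right (hite2 j) _
      _ = A + ((Fstar.card : ℝ) - 1) * B + 2 * (S - B) := by
          simp only [Finset.sum_add_distrib, ← Finset.mul_sum, hΔ, Finset.sum_sub_distrib]
          try rw [← hA, ← hB, ← hS]
          try ring
  have hmain : 0 ≤ A - 3 * B + 2 * S := by linarith
  -- Minkowski
  have hA0 : 0 ≤ A := Finset.sum_nonneg fun j _ => Real.rpow_nonneg (hds0 j) p
  have hB0 : 0 ≤ B := Finset.sum_nonneg fun j _ => Real.rpow_nonneg (hd0 j) p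
  have hS0 : 0 ≤ S := Finset.sum_nonneg fun j _ =>
    Real.rpow_nonneg (by have := hd0 j; have := hds0 j; linarith) p
  have hmink : S ≤ (2 * phiP p Fstar hFstar + phiP p F hF) ^ p := by
    have h1 := Real.Lp_add_le_of_nonneg (s := (Finset.univ : Finset V))
      (f := fun j => 2 * ds j) (g := d) hp
      (fun i _ => by show (0:ℝ) ≤ 2 * ds i; have := hds0 i; linarith) (fun i _ => hd0 i)
    have heq1 : ∑ j : V, ((fun j => 2 * ds j) j + d j) ^ p = S := by
      rw [hS]
      exact Finset.sum_congr rfl fun j _ => by rw [add_comm]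
    have heq2 : ∑ j : V, ((2:ℝ) * ds j) ^ p = 2 ^ p * A := by
      rw [hA, Finset.mul_sum]
      refine Finset.sum_congr rfl fun j _ => ?_
      rw [Real.mul_rpow (by norm_num) (hds0 j)]
    have heq3 : ((2:ℝ) ^ p * A) ^ (1/p) = 2 * A ^ (1/p) := by
      rw [Real.mul_rpow (Real.rpow_nonneg (by norm_num) p) hA0,
        ← Real.rpow_mul (by norm_num : (0:ℝ) ≤ 2), mul_one_div_cancel (by positivity : p ≠ 0),
        Real.rpow_one]
    have h2 : S ^ (1/p) ≤ 2 * phiP p Fstar hFstar + phiP p F hF := by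
      have := h1
      rw [heq1, heq2, heq3] at this
      calc S ^ (1/p) ≤ 2 * A ^ (1/p) + B ^ (1/p) := this
        _ = 2 * phiP p Fstar hFstar + phiP p F hF := by rw [phiP, phiP, ← hA, ← hB]
    calc S = (S ^ (1/p)) ^ p := by
          rw [← Real.rpow_mul hS0, one_div, inv_mul_cancel₀ (by positivity : p ≠ 0),
            Real.rpow_one]
      _ ≤ (2 * phiP p Fstar hFstar + phiP p F hF) ^ p :=
          Real.rpow_le_rpow (Real.rpow_nonneg hS0 _) h2 hp0
  have hPA : phiP p Fstar hFstar ^ p = A := by rw [phiP_pow hp, hA]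
  have hPB : phiP p F hF ^ p = B := by rw [phiP_pow hp, hB]
  rw [hPA, hPB]
  linarith
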